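/- If f is nondecreasing and γ-submodular (γ·(f(S∪U∪{ω}) − f(S∪U)) ≤ f(S∪{ω}) − f(S) for all S, U ⊆ V, ω ∈ V), then for all S, U ⊆ V: γ·(f(S∪U) − f(S)) ≤ Σ_{ω∈U\S} (f(S∪{ω}) − f(S)). -/
import Mathlib


/-- If `f` is nondecreasing and `γ`-submodular (elementwise definition), then
`γ·(f(S∪U) − f(S)) ≤ Σ_{ω ∈ U\S} (f(S∪{ω}) − f(S))` for all `S, U`. -/
theorem weak_submodular_sum_bound {V : Type*} [Fintype V] [DecidableEq V]
    (f : Finset V → ℝ) (γ : ℝ) (hγ0 : 0 ≤ γ) (hγ1 : γ ≤ 1)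
    (hmono : ∀ S₁ S₂ : Finset V, S₁ ⊆ S₂ → f S₁ ≤ f S₂)
    (hsub : ∀ (S U : Finset V) (ω : V),
      γ * (f (insert ω (S ∪ U)) - f (S ∪ U)) ≤ f (insert ω S) - f S) :
    ∀ S U : Finset V,
      γ * (f (S ∪ U) - f S) ≤ ∑ ω ∈ U \ S, (f (insert ω S) - f S) := by
  intro S U
  induction U using Finset.induction with
  | empty => simp
  | @insert a T ha IH =>
    by_cases haS : a ∈ S
    · have h1 : S ∪ insert a T = S ∪ T := by
        ext x; simp only [Finset.mem_union, Finset.mem_insert]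
        constructor
        · rintro (h | rfl | h) <;> simp_all
        · tauto
      have h2 : insert a T \ S = T \ S := by
        ext x; simp only [Finset.mem_sdiff, Finset.mem_insert]
        constructor
        · rintro ⟨rfl | h, hx⟩ <;> simp_all
        · tauto
      rw [h1, h2]; exact IH
    · have h1 : S ∪ insert a T = insert a (S ∪ T) := Finset.union_insert a S T
      have h2 : insert a T \ S = insert a (T \ S) := by
        ext x; simp only [Finset.mem_sdiff, Finset.mem_insert]
        constructor
        · rintro ⟨rfl | h, hx⟩
          · exact Or.inl rfl
          · exact Or.inr ⟨h, hx⟩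
        · rintro (rfl | ⟨h, hx⟩)
          · exact ⟨Or.inl rfl, haS⟩
          · exact ⟨Or.inr h, hx⟩
      have hna : a ∉ T \ S := fun h => ha (Finset.mem_sdiff.mp h).1
      rw [h1, h2, Finset.sum_insert hna]
      have key := hsub S T a
      have : γ * (f (insert a (S ∪ T)) - f S)
          = γ * (f (insert a (S ∪ T)) - f (S ∪ T)) + γ * (f (S ∪ T) - f S) := by ring
      rw [this]
      exact add_le_add key IH
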